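/- Permutation symmetry of the partition-sum G_n(ζ): the function G_n(ζ) = Σ over partitions of {η_1,…,η_n} and {ξ_1,…,ξ_n} into subsets (η_I, η_II) and (ξ_I, ξ_II) of equal cardinalities of ζ^{|II|} f(ξ_I,ξ_II) f(η_II,η_I) K_{|I|}(η_I|ξ_I) K_{|II|}(ξ_II+c|η_II) is a symmetric function of (η_1,…,η_n) and a symmetric function of (ξ_1,…,ξ_n). -/

import Mathlib

noncomputable def gfun (c x y : ℂ) : ℂ := c / (x - y)
noncomputable def ffun (c x y : ℂ) : ℂ := (x - y + c) / (x - y)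
noncomputable def hfun (c x y : ℂ) : ℂ := (x - y + c) / c
noncomputable def tfun (c x y : ℂ) : ℂ := c ^ 2 / ((x - y) * (x - y + c))

noncomputable def Kdet (c : ℂ) (n : ℕ) (x y : Fin n → ℂ) : ℂ :=
  (∏ j : Fin n, ∏ k : Fin n, if k < j then gfun c (x j) (x k) else 1) *
  (∏ j : Fin n, ∏ k : Fin n, if j < k then gfun c (y j) (y k) else 1) *
  (∏ j : Fin n, ∏ k : Fin n, hfun c (x j) (y k)) *
  (Matrix.of fun j k => tfun c (x j) (y k)).det

/-- The partition sum `G_n(ζ)` of Lemma 4.1: the sum over all partitions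
`ξ̄ = ξ_I ⊔ ξ_II`, `η̄ = η_I ⊔ η_II` with `|η_I| = |ξ_I|` of
`ζ^{|II|} f(ξ_I,ξ_II) f(η_II,η_I) K_{|I|}(η_I|ξ_I) K_{|II|}(ξ_II+c|η_II)`.
Here `S` indexes `ξ_I` and `T` indexes `η_I`. -/
noncomputable def Gsum (c ζ : ℂ) (n : ℕ) (η ξ : Fin n → ℂ) : ℂ :=
  ∑ S : Finset (Fin n), ∑ T : Finset (Fin n),
    if h : T.card = S.card then
      ζ ^ (n - S.card) *
      (∏ i ∈ S, ∏ j ∈ Sᶜ, ffun c (ξ i) (ξ j)) *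
      (∏ i ∈ Tᶜ, ∏ j ∈ T, ffun c (η i) (η j)) *
      Kdet c S.card (fun i => η ((T.orderIsoOfFin h) i))
        (fun i => ξ ((S.orderIsoOfFin rfl) i)) *
      Kdet c Sᶜ.card (fun i => ξ ((Sᶜ.orderIsoOfFin rfl) i) + c)
        (fun i => η ((Tᶜ.orderIsoOfFin
          (by simp [Finset.card_compl, h])) i))
    else 0


open Finset Equiv

noncomputable def Dprod (m : ℕ) (x : Fin m → ℂ) : ℂ :=
  ∏ j, ∏ k, (if k < j then (x j - x k) else 1)

lemma Dprod_eq_vandermonde (m : ℕ) (x : Fin m → ℂ) :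
    Dprod m x = (Matrix.vandermonde x).det := by
  unfold Dprod
  rw [Matrix.det_vandermonde, Finset.prod_comm]
  refine Finset.prod_congr rfl fun i _ => ?_
  rw [← Finset.prod_filter]
  congr 1
  ext j; simp

lemma Dprod_perm (m : ℕ) (x : Fin m → ℂ) (τ : Equiv.Perm (Fin m)) :
    Dprod m (x ∘ τ) = (Equiv.Perm.sign τ : ℂ) * Dprod m x := by
  rw [Dprod_eq_vandermonde, Dprod_eq_vandermonde]
  have : Matrix.vandermonde (x ∘ τ) = (Matrix.vandermonde x).submatrix τ id := rfl
  rw [this, Matrix.det_permute]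

lemma gprodx_eq (c : ℂ) (m : ℕ) (x : Fin m → ℂ) :
    (∏ j : Fin m, ∏ k : Fin m, if k < j then gfun c (x j) (x k) else 1)
      = (∏ j : Fin m, ∏ k : Fin m, if k < j then c else 1) / Dprod m x := by
  unfold Dprod
  rw [← Finset.prod_div_distrib]
  refine Finset.prod_congr rfl fun j _ => ?_
  rw [← Finset.prod_div_distrib]
  refine Finset.prod_congr rfl fun k _ => ?_
  split <;> simp [gfun]

lemma gprodx_perm (c : ℂ) (m : ℕ) (x : Fin m → ℂ) (τ : Equiv.Perm (Fin m)) :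
    (∏ j : Fin m, ∏ k : Fin m, if k < j then gfun c ((x ∘ τ) j) ((x ∘ τ) k) else 1)
      = (Equiv.Perm.sign τ : ℂ) *
        (∏ j : Fin m, ∏ k : Fin m, if k < j then gfun c (x j) (x k) else 1) := by
  rw [gprodx_eq, gprodx_eq, Dprod_perm]
  rcases Int.units_eq_one_or (Equiv.Perm.sign τ) with h | h <;> rw [h] <;> push_cast
  · simp
  · rw [neg_one_mul, div_neg]; ring

lemma gprody_eq (c : ℂ) (m : ℕ) (y : Fin m → ℂ) :
    (∏ j : Fin m, ∏ k : Fin m, if j < k then gfun c (y j) (y k) else 1)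
      = (∏ j : Fin m, ∏ k : Fin m, if j < k then c else 1) /
          Dprod m (fun i => - y i) := by
  unfold Dprod
  rw [Finset.prod_comm, Finset.prod_comm (f := fun j k => if j < k then c else 1),
    ← Finset.prod_div_distrib]
  refine Finset.prod_congr rfl fun j _ => ?_
  rw [← Finset.prod_div_distrib]
  refine Finset.prod_congr rfl fun k _ => ?_
  split <;> simp [gfun]
  ring_nf

lemma gprody_perm (c : ℂ) (m : ℕ) (y : Fin m → ℂ) (τ : Equiv.Perm (Fin m)) :
    (∏ j : Fin m, ∏ k : Fin m, if j < k then gfun c ((y ∘ τ) j) ((y ∘ τ) k) else 1)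
      = (Equiv.Perm.sign τ : ℂ) *
        (∏ j : Fin m, ∏ k : Fin m, if j < k then gfun c (y j) (y k) else 1) := by
  rw [gprody_eq, gprody_eq]
  have : (fun i => - (y ∘ τ) i) = (fun i => - y i) ∘ τ := rfl
  rw [this, Dprod_perm]
  rcases Int.units_eq_one_or (Equiv.Perm.sign τ) with h | h <;> rw [h] <;> push_cast
  · simp
  · rw [neg_one_mul, div_neg]; ring

lemma sign_sq (m : ℕ) (τ : Equiv.Perm (Fin m)) :
    (Equiv.Perm.sign τ : ℂ) * (Equiv.Perm.sign τ : ℂ) = 1 := by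
  rcases Int.units_eq_one_or (Equiv.Perm.sign τ) with h | h <;> rw [h] <;> norm_num

lemma Kdet_perm_x (c : ℂ) (m : ℕ) (x y : Fin m → ℂ) (τ : Equiv.Perm (Fin m)) :
    Kdet c m (x ∘ τ) y = Kdet c m x y := by
  unfold Kdet
  rw [gprodx_perm]
  have h3 : (∏ j : Fin m, ∏ k : Fin m, hfun c ((x ∘ τ) j) (y k))
      = ∏ j : Fin m, ∏ k : Fin m, hfun c (x j) (y k) :=
    Equiv.prod_comp τ (fun j => ∏ k, hfun c (x j) (y k))
  rw [h3]
  have h4 : (Matrix.of fun j k => tfun c ((x ∘ τ) j) (y k)).det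
      = (Equiv.Perm.sign τ : ℂ) * (Matrix.of fun j k => tfun c (x j) (y k)).det := by
    have : (Matrix.of fun j k => tfun c ((x ∘ τ) j) (y k))
        = (Matrix.of fun j k => tfun c (x j) (y k)).submatrix τ id := rfl
    rw [this, Matrix.det_permute]
  rw [h4]
  have hs := sign_sq m τ
  set s := (Equiv.Perm.sign τ : ℂ)
  have key : ∀ A B H D : ℂ, (s * A) * B * H * (s * D) = A * B * H * D := by
    intro A B H D
    calc (s * A) * B * H * (s * D) = (s * s) * (A * B * H * D) := by ring
      _ = A * B * H * D := by rw [hs, one_mul]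
  exact key _ _ _ _

lemma Kdet_perm_y (c : ℂ) (m : ℕ) (x y : Fin m → ℂ) (τ : Equiv.Perm (Fin m)) :
    Kdet c m x (y ∘ τ) = Kdet c m x y := by
  unfold Kdet
  rw [gprody_perm]
  have h3 : (∏ j : Fin m, ∏ k : Fin m, hfun c (x j) ((y ∘ τ) k))
      = ∏ j : Fin m, ∏ k : Fin m, hfun c (x j) (y k) := by
    refine Finset.prod_congr rfl fun j _ => ?_
    exact Equiv.prod_comp τ (fun k => hfun c (x j) (y k))
  rw [h3]
  have h4 : (Matrix.of fun j k => tfun c (x j) ((y ∘ τ) k)).det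
      = (Equiv.Perm.sign τ : ℂ) * (Matrix.of fun j k => tfun c (x j) (y k)).det := by
    have : (Matrix.of fun j k => tfun c (x j) ((y ∘ τ) k))
        = (Matrix.of fun j k => tfun c (x j) (y k)).submatrix id τ := rfl
    rw [this, Matrix.det_permute']
  rw [h4]
  have hs := sign_sq m τ
  set s := (Equiv.Perm.sign τ : ℂ)
  have key : ∀ A B H D : ℂ, A * (s * B) * H * (s * D) = A * B * H * D := by
    intro A B H D
    calc A * (s * B) * H * (s * D) = (s * s) * (A * B * H * D) := by ring
      _ = A * B * H * D := by rw [hs, one_mul]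
  exact key _ _ _ _

lemma compl_map_perm {n : ℕ} (σ : Equiv.Perm (Fin n)) (T : Finset (Fin n)) :
    (T.map σ.toEmbedding)ᶜ = Tᶜ.map σ.toEmbedding := by
  ext a
  simp [Finset.mem_map_equiv]

lemma oIF_congr {n m : ℕ} (U V : Finset (Fin n)) (hUV : U = V)
    (hU : U.card = m) (hV : V.card = m) (i : Fin m) :
    ((U.orderIsoOfFin hU) i : Fin n) = (V.orderIsoOfFin hV) i := by
  subst hUV; rfl

lemma oIF_cast {n m m' : ℕ} (U : Finset (Fin n)) (e : m = m')
    (hU : U.card = m) (hU' : U.card = m') (i : Fin m) :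
    ((U.orderIsoOfFin hU') (Fin.cast e i) : Fin n) = (U.orderIsoOfFin hU) i := by
  subst e; rfl

lemma Kdet_cast (c : ℂ) {m m' : ℕ} (e : m = m') (x y : Fin m' → ℂ) :
    Kdet c m' x y = Kdet c m (x ∘ Fin.cast e) (y ∘ Fin.cast e) := by
  subst e; rfl

lemma sortPerm {n m : ℕ} (σ : Equiv.Perm (Fin n)) (U : Finset (Fin n))
    (hU : U.card = m) (hU' : (U.map σ.toEmbedding).card = m) :
    ∃ τ : Equiv.Perm (Fin m), ∀ i : Fin m,
      (((U.map σ.toEmbedding).orderIsoOfFin hU') (τ i) : Fin n)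
        = σ ((U.orderIsoOfFin hU) i) := by
  have hmem : ∀ a : Fin n, a ∈ U ↔ σ a ∈ U.map σ.toEmbedding := by
    intro a; simp [Finset.mem_map_equiv]
  refine ⟨((U.orderIsoOfFin hU).toEquiv.trans (σ.subtypeEquiv hmem)).trans
    ((U.map σ.toEmbedding).orderIsoOfFin hU').toEquiv.symm, fun i => ?_⟩
  simp [Equiv.subtypeEquiv]

theorem Gsum_eta (c ζ : ℂ) (n : ℕ) (η ξ : Fin n → ℂ) (σ : Equiv.Perm (Fin n)) :
    Gsum c ζ n (η ∘ σ) ξ = Gsum c ζ n η ξ := by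
  unfold Gsum
  refine Finset.sum_congr rfl fun S _ => ?_
  refine Fintype.sum_equiv σ.finsetCongr _ _ fun T => ?_
  rw [Equiv.finsetCongr_apply]
  by_cases h : T.card = S.card
  · have h' : (T.map σ.toEmbedding).card = S.card := by
      rw [Finset.card_map]; exact h
    rw [dif_pos h, dif_pos h']
    have pf : Tᶜ.card = Sᶜ.card := by simp [Finset.card_compl, h]
    have pf' : (T.map σ.toEmbedding)ᶜ.card = Sᶜ.card := by
      simp [Finset.card_compl, h']
    congr 1
    · congr 1
      · congr 1
        -- B factor
        rw [compl_map_perm, Finset.prod_map]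
        refine Finset.prod_congr rfl fun i _ => ?_
        rw [Finset.prod_map]
        rfl
      · -- K1
        obtain ⟨τ, hτ⟩ := sortPerm σ T h h'
        rw [← Kdet_perm_x c S.card
          (fun i => η (((T.map σ.toEmbedding).orderIsoOfFin h') i)) _ τ]
        congr 1
        funext i
        exact congrArg η (hτ i).symm
    · -- K2
      have pf2 : (Tᶜ.map σ.toEmbedding).card = Sᶜ.card := by
        rw [← compl_map_perm]; exact pf'
      have ey : (fun i => η (((T.map σ.toEmbedding)ᶜ.orderIsoOfFin pf') i))
          = fun i => η (((Tᶜ.map σ.toEmbedding).orderIsoOfFin pf2) i) :=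
        funext fun i => congrArg η (oIF_congr _ _ (compl_map_perm σ T) pf' pf2 i)
      obtain ⟨τ, hτ⟩ := sortPerm σ Tᶜ pf pf2
      have := Kdet_perm_y c Sᶜ.card
        (fun i => ξ ((Sᶜ.orderIsoOfFin rfl) i) + c)
        (fun i => η (((Tᶜ.map σ.toEmbedding).orderIsoOfFin pf2) i)) τ
      rw [ey, ← this]
      congr 1
      funext i
      exact congrArg η (hτ i).symm
  · have h' : ¬ (T.map σ.toEmbedding).card = S.card := by
      rw [Finset.card_map]; exact h
    rw [dif_neg h, dif_neg h']

theorem Gsum_xi (c ζ : ℂ) (n : ℕ) (η ξ : Fin n → ℂ) (σ : Equiv.Perm (Fin n)) :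
    Gsum c ζ n η (ξ ∘ σ) = Gsum c ζ n η ξ := by
  unfold Gsum
  refine Fintype.sum_equiv σ.finsetCongr _ _ fun S => ?_
  rw [Equiv.finsetCongr_apply]
  refine Finset.sum_congr rfl fun T _ => ?_
  by_cases h : T.card = S.card
  · have hm : S.card = (S.map σ.toEmbedding).card := (Finset.card_map _).symm
    have h' : T.card = (S.map σ.toEmbedding).card := h.trans hm
    rw [dif_pos h, dif_pos h']
    have pf : Tᶜ.card = Sᶜ.card := by simp [Finset.card_compl, h]
    have hm2 : Sᶜ.card = (S.map σ.toEmbedding)ᶜ.card := by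
      rw [compl_map_perm, Finset.card_map]
    have pf' : Tᶜ.card = (S.map σ.toEmbedding)ᶜ.card := pf.trans hm2
    congr 1
    · congr 1
      · congr 1
        · congr 1
          · rw [Finset.card_map]
          · symm
            rw [compl_map_perm, Finset.prod_map]
            refine Finset.prod_congr rfl fun i _ => ?_
            rw [Finset.prod_map]
            rfl
      · -- K1
        rw [Kdet_cast c hm]
        have hS' : (S.map σ.toEmbedding).card = S.card := Finset.card_map _
        have e1 : (fun i => η ((T.orderIsoOfFin h') i)) ∘ Fin.cast hm
            = fun i => η ((T.orderIsoOfFin h) i) :=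
          funext fun i => congrArg η (oIF_cast T hm h h' i)
        have e2 : (fun i => ξ (((S.map σ.toEmbedding).orderIsoOfFin rfl) i)) ∘ Fin.cast hm
            = fun i => ξ (((S.map σ.toEmbedding).orderIsoOfFin hS') i) :=
          funext fun i => congrArg ξ (oIF_cast _ hm hS' rfl i)
        rw [e1, e2]
        obtain ⟨τ, hτ⟩ := sortPerm σ S rfl hS'
        rw [← Kdet_perm_y c S.card _
          (fun i => ξ (((S.map σ.toEmbedding).orderIsoOfFin hS') i)) τ]
        congr 1
        funext i
        exact congrArg ξ (hτ i).symm
    · -- K2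
      rw [Kdet_cast c hm2]
      have hS'c : (S.map σ.toEmbedding)ᶜ.card = Sᶜ.card := hm2.symm
      have e1 : (fun i => η ((Tᶜ.orderIsoOfFin pf') i)) ∘ Fin.cast hm2
          = fun i => η ((Tᶜ.orderIsoOfFin pf) i) :=
        funext fun i => congrArg η (oIF_cast Tᶜ hm2 pf pf' i)
      have e2 : (fun i => ξ (((S.map σ.toEmbedding)ᶜ.orderIsoOfFin rfl) i) + c) ∘ Fin.cast hm2
          = fun i => ξ (((S.map σ.toEmbedding)ᶜ.orderIsoOfFin hS'c) i) + c :=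
        funext fun i => congrArg (fun z => ξ z + c) (oIF_cast _ hm2 hS'c rfl i)
      rw [e1, e2]
      have pfc : (Sᶜ.map σ.toEmbedding).card = Sᶜ.card := Finset.card_map _
      have e3 : (fun i => ξ (((S.map σ.toEmbedding)ᶜ.orderIsoOfFin hS'c) i) + c)
          = fun i => ξ (((Sᶜ.map σ.toEmbedding).orderIsoOfFin pfc) i) + c :=
        funext fun i => congrArg (fun z => ξ z + c)
          (oIF_congr _ _ (compl_map_perm σ S) hS'c pfc i)
      rw [e3]
      obtain ⟨τ, hτ⟩ := sortPerm σ Sᶜ rfl pfc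
      rw [← Kdet_perm_x c Sᶜ.card
        (fun i => ξ (((Sᶜ.map σ.toEmbedding).orderIsoOfFin pfc) i) + c) _ τ]
      congr 1
      funext i
      exact congrArg (fun z => ξ z + c) (hτ i).symm
  · have h' : ¬ T.card = (S.map σ.toEmbedding).card := by
      rw [Finset.card_map]; exact h
    rw [dif_neg h, dif_neg h']


/-- the partition sum `G_n(ζ)` is a symmetric function of
`(η_1,…,η_n)` and a symmetric function of `(ξ_1,…,ξ_n)`. -/
theorem Gsum_symmetric (c : ℂ) (hc : c ≠ 0) (ζ : ℂ) (n : ℕ)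
    (η ξ : Fin n → ℂ)
    (hη : Function.Injective η) (hξ : Function.Injective ξ)
    (hgen : ∀ i j, ξ i ≠ η j ∧ η i - ξ j + c ≠ 0 ∧
      ξ i + c ≠ η j ∧ ξ i + 2 * c ≠ η j)
    (σ : Equiv.Perm (Fin n)) :
    Gsum c ζ n (η ∘ σ) ξ = Gsum c ζ n η ξ ∧
    Gsum c ζ n η (ξ ∘ σ) = Gsum c ζ n η ξ :=
  ⟨Gsum_eta c ζ n η ξ σ, Gsum_xi c ζ n η ξ σ⟩
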